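/- Let E be a real inner product space, let s, y ∈ E with s ≠ 0 and ⟨s, y⟩ > 0, and let λ > 0. Define the memoryless BFGS operator B : E → E by B(d) = (1/λ)(d − (⟨s, d⟩/‖s‖²) s) + (⟨y, d⟩/⟨s, y⟩) y. Then B is positive definite: ⟨d, B d⟩ > 0 for every d ∈ E with d ≠ 0. -/

import Mathlib

open scoped RealInnerProductSpace

/-- The memoryless BFGS operator
`B(d) = (1/λ)(d - (⟪s, d⟫/‖s‖²) s) + (⟪y, d⟫/⟪s, y⟫) y` is positive definite. -/
theorem memorylessBFGS_posDef
    {E : Type*} [NormedAddCommGroup E] [InnerProductSpace ℝ E]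
    (s y : E) (hs : s ≠ 0) (hsy : 0 < ⟪s, y⟫) (lam : ℝ) (hlam : 0 < lam)
    (B : E → E)
    (hB : ∀ d : E, B d = (1 / lam) • (d - (⟪s, d⟫ / ‖s‖ ^ 2) • s) + (⟪y, d⟫ / ⟪s, y⟫) • y) :
    ∀ d : E, d ≠ 0 → 0 < ⟪d, B d⟫ := by
  intro d hd
  have hs2 : (0:ℝ) < ‖s‖ ^ 2 := pow_pos (norm_pos_iff.mpr hs) 2
  set c := ⟪s, d⟫ / ‖s‖ ^ 2 with hc
  set w := d - c • s with hw
  have hsw : ⟪s, w⟫ = 0 := by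
    rw [hw, inner_sub_right, real_inner_smul_right, hc, real_inner_self_eq_norm_sq]
    field_simp
    ring
  have hdsplit : d = w + c • s := by rw [hw]; abel
  have hdw : ⟪d, w⟫ = ‖w‖ ^ 2 := by
    rw [hdsplit, inner_add_left, real_inner_smul_left, hsw,
      real_inner_self_eq_norm_sq]
    ring
  have key : ⟪d, B d⟫ = (1/lam) * ‖w‖ ^ 2 + ⟪y, d⟫ ^ 2 / ⟪s, y⟫ := by
    rw [hB d, inner_add_right, real_inner_smul_right, real_inner_smul_right, ← hc, ← hw, hdw,
      real_inner_comm d y]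
    ring
  rw [key]
  by_cases hw0 : w = 0
  · have hdc : d = c • s := by rw [hw, sub_eq_zero] at hw0; exact hw0
    have hc0 : c ≠ 0 := by
      rintro h; rw [h, zero_smul] at hdc; exact hd hdc
    have hyd : ⟪y, d⟫ = c * ⟪s, y⟫ := by
      rw [hdc, real_inner_smul_right, real_inner_comm]
    have h2 : 0 < ⟪y, d⟫ ^ 2 / ⟪s, y⟫ := by
      apply div_pos _ hsy
      rw [hyd]
      positivity
    have h1 : 0 ≤ (1/lam) * ‖w‖ ^ 2 := by positivity
    linarith
  · have h1 : 0 < (1/lam) * ‖w‖ ^ 2 := by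
      have : 0 < ‖w‖ ^ 2 := pow_pos (norm_pos_iff.mpr hw0) 2
      positivity
    have h2 : 0 ≤ ⟪y, d⟫ ^ 2 / ⟪s, y⟫ := by positivity
    linarith
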